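/- Assume the Hypothesis, and assume further that if char(F) = 2 then O is closed under taking square roots. Then f(K) = K. -/

import Mathlib

open scoped Classical

/-- The cross-ratio `[a,b;c,d]` on the projective line `F ∪ {∞}` (modelled as
`Option F`, with `none` playing the role of `∞`), with the usual conventions
at `∞`; junk value `0` when two or more of the arguments are `∞`. -/
noncomputable def crossRatio {F : Type*} [Field F] :
    Option F → Option F → Option F → Option F → F
  | none,   some b, some c, some d => (d - b) / (c - b)
  | some a, none,   some c, some d => (c - a) / (d - a)
  | some a, some b, none,   some d => (d - b) / (d - a)
  | some a, some b, some c, none   => (c - a) / (c - b)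
  | some a, some b, some c, some d => ((c - a) / (c - b)) * ((d - b) / (d - a))
  | _, _, _, _ => 0

/-- A permutation `f` of the projective line is `O`-preserving if for all
quadruples of distinct points, `[a,b;c,d] ∈ O ↔ [f a, f b; f c, f d] ∈ O`. -/
def OPreserving {F : Type*} [Field F] (O : Set F) (f : Equiv.Perm (Option F)) : Prop :=
  ∀ a b c d : Option F, a ≠ b → a ≠ c → a ≠ d → b ≠ c → b ≠ d → c ≠ d →
    (crossRatio a b c d ∈ O ↔ crossRatio (f a) (f b) (f c) (f d) ∈ O)

/-- The map `F → F` induced by a permutation of `F ∪ {∞}` fixing `∞`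
(junk value `0` if `f` maps a finite point to `∞`). -/
noncomputable def fmap {F : Type*} [Field F] (f : Equiv.Perm (Option F)) (a : F) : F :=
  (f (some a)).getD 0

section Aux
variable {F : Type*} [Field F]

inductive InT (O : Set F) : Option F → Prop
  | infty : InT O none
  | zero : InT O (some 0)
  | one : InT O (some 1)
  | step (a b c d : Option F) (hab : a ≠ b) (hac : a ≠ c) (had : a ≠ d)
      (hbc : b ≠ c) (hbd : b ≠ d) (hcd : c ≠ d)
      (ha : InT O a) (hb : InT O b) (hc : InT O c)
      (h : crossRatio a b c d ∈ O) : InT O d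

variable {O : Set F}

lemma cr1 (b c d : F) : crossRatio (none : Option F) (some b) (some c) (some d) = (d - b) / (c - b) := rfl
lemma cr2 (a c d : F) : crossRatio (some a) (none : Option F) (some c) (some d) = (c - a) / (d - a) := rfl
lemma cr3 (a b d : F) : crossRatio (some a) (some b) (none : Option F) (some d) = (d - b) / (d - a) := rfl
lemma cr5 (a b c d : F) : crossRatio (some a) (some b) (some c) (some d)
    = ((c - a) / (c - b)) * ((d - b) / (d - a)) := rfl

lemma some_ne_some {x y : F} (h : x ≠ y) : (some x : Option F) ≠ some y := by
  simpa using h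

/-- Op with `∞` in the first slot: `d = v + l(u-v)`. -/
lemma P1 {l u v : F} (hl : l ∈ O) (hl0 : l ≠ 0) (hl1 : l ≠ 1)
    (hu : InT O (some u)) (hv : InT O (some v)) (huv : u ≠ v) :
    InT O (some (v + l * (u - v))) := by
  have hsub : u - v ≠ 0 := sub_ne_zero.mpr huv
  refine InT.step none (some v) (some u) (some (v + l * (u - v))) (by simp) (by simp) (by simp)
    (some_ne_some (Ne.symm huv)) (some_ne_some ?_) (some_ne_some ?_) InT.infty hv hu ?_
  · intro h
    exact mul_ne_zero hl0 hsub (by linear_combination -h)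
  · intro h
    have h2 : (1 - l) * (u - v) = 0 := by linear_combination h
    rcases mul_eq_zero.mp h2 with h' | h'
    · exact hl1 (by linear_combination -h')
    · exact hsub h'
  · have e : crossRatio (none : Option F) (some v) (some u) (some (v + l * (u - v))) = l := by
      rw [cr1]; field_simp; ring
    rw [e]; exact hl

/-- Op with `∞` in the second slot: `d = a + (c-a)/l`. -/
lemma P2 {l a c : F} (hl : l ∈ O) (hl0 : l ≠ 0) (hl1 : l ≠ 1)
    (ha : InT O (some a)) (hc : InT O (some c)) (hac : a ≠ c) :
    InT O (some (a + (c - a) / l)) := by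
  have hsub : c - a ≠ 0 := sub_ne_zero.mpr (Ne.symm hac)
  have hd : (c - a) / l ≠ 0 := div_ne_zero hsub hl0
  refine InT.step (some a) none (some c) (some (a + (c - a) / l))
    (by simp) (some_ne_some hac) (some_ne_some ?_) (by simp) (by simp)
    (some_ne_some ?_) ha InT.infty hc ?_
  · intro h; exact hd (by linear_combination -h)
  · intro h
    have h2 : (c - a) * (l - 1) = 0 := by
      have h' : l * (a + (c - a) / l) = l * c := by rw [← h]
      field_simp at h'
      linear_combination -h'
    rcases mul_eq_zero.mp h2 with h' | h'
    · exact hsub h'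
    · exact hl1 (by linear_combination h')
  · have e : crossRatio (some a) (none : Option F) (some c) (some (a + (c - a) / l)) = l := by
      rw [cr2]
      have h3 : a + (c - a) / l - a = (c - a) / l := by ring
      rw [h3]; field_simp
    rw [e]; exact hl

/-- Op with `∞` in the third slot: `d = (b - l·a)/(1 - l)`. -/
lemma P3 {l a b : F} (hl : l ∈ O) (hl0 : l ≠ 0) (hl1 : l ≠ 1)
    (ha : InT O (some a)) (hb : InT O (some b)) (hab : a ≠ b) :
    InT O (some ((b - l * a) / (1 - l))) := by
  have hba : b - a ≠ 0 := sub_ne_zero.mpr (Ne.symm hab)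
  have hl1' : (1 : F) - l ≠ 0 := sub_ne_zero.mpr (Ne.symm hl1)
  obtain ⟨d, hd⟩ : ∃ d, d = (b - l * a) / (1 - l) := ⟨_, rfl⟩
  have eda : d - a = (b - a) / (1 - l) := by rw [hd]; field_simp; ring
  have edb : d - b = l * (b - a) / (1 - l) := by rw [hd]; field_simp; ring
  have hda : d - a ≠ 0 := by rw [eda]; exact div_ne_zero hba hl1'
  have hdb : d - b ≠ 0 := by rw [edb]; exact div_ne_zero (mul_ne_zero hl0 hba) hl1'
  rw [← hd]
  refine InT.step (some a) (some b) none (some d) (some_ne_some hab) (by simp)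
    (some_ne_some (Ne.symm (sub_ne_zero.mp hda))) (by simp)
    (some_ne_some (Ne.symm (sub_ne_zero.mp hdb))) (by simp) ha hb InT.infty ?_
  have e : crossRatio (some a) (some b) (none : Option F) (some d) = l := by
    rw [cr3, edb, eda]
    field_simp
  rw [e]; exact hl

/-- The all-finite op. -/
lemma P4 {l a b c : F} (hl : l ∈ O) (hl0 : l ≠ 0) (hl1 : l ≠ 1)
    (ha : InT O (some a)) (hb : InT O (some b)) (hc : InT O (some c))
    (hab : a ≠ b) (hac : a ≠ c) (hbc : b ≠ c)
    (hden : (c - a) - l * (c - b) ≠ 0) :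
    InT O (some ((b * (c - a) - l * a * (c - b)) / ((c - a) - l * (c - b)))) := by
  have hca : c - a ≠ 0 := sub_ne_zero.mpr (Ne.symm hac)
  have hcb : c - b ≠ 0 := sub_ne_zero.mpr (Ne.symm hbc)
  have hba : b - a ≠ 0 := sub_ne_zero.mpr (Ne.symm hab)
  have hbc' : b - c ≠ 0 := sub_ne_zero.mpr hbc
  have hl1' : (1 : F) - l ≠ 0 := sub_ne_zero.mpr (Ne.symm hl1)
  obtain ⟨d, hd⟩ : ∃ d, d = (b * (c - a) - l * a * (c - b)) / ((c - a) - l * (c - b)) := ⟨_, rfl⟩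
  have eda : d - a = (c - a) * (b - a) / ((c - a) - l * (c - b)) := by
    rw [hd]; field_simp; ring
  have edb : d - b = l * ((c - b) * (b - a)) / ((c - a) - l * (c - b)) := by
    rw [hd]; field_simp; ring
  have edc : d - c = (1 - l) * ((c - a) * (b - c)) / ((c - a) - l * (c - b)) := by
    rw [hd]; field_simp; ring
  have hda : d - a ≠ 0 := by rw [eda]; exact div_ne_zero (mul_ne_zero hca hba) hden
  have hdb : d - b ≠ 0 := by
    rw [edb]; exact div_ne_zero (mul_ne_zero hl0 (mul_ne_zero hcb hba)) hden
  have hdc : d - c ≠ 0 := by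
    rw [edc]; exact div_ne_zero (mul_ne_zero hl1' (mul_ne_zero hca hbc')) hden
  rw [← hd]
  refine InT.step (some a) (some b) (some c) (some d) (some_ne_some hab) (some_ne_some hac)
    (some_ne_some (Ne.symm (sub_ne_zero.mp hda))) (some_ne_some hbc)
    (some_ne_some (Ne.symm (sub_ne_zero.mp hdb)))
    (some_ne_some (Ne.symm (sub_ne_zero.mp hdc))) ha hb hc ?_
  have e : crossRatio (some a) (some b) (some c) (some d) = l := by
    rw [cr5, edb, eda, div_div_div_cancel_right₀ hden]
    field_simp
  rw [e]; exact hl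

section Derived
variable {l : F} (hl : l ∈ O) (hl0 : l ≠ 0) (hl1 : l ≠ 1)
include hl hl0 hl1

lemma D_lam : InT O (some l) := by
  simpa using P1 hl hl0 hl1 InT.one InT.zero one_ne_zero

lemma D_mul {x : F} (hx : InT O (some x)) : InT O (some (l * x)) := by
  rcases eq_or_ne x 0 with rfl | hx0
  · rw [mul_zero]; exact InT.zero
  · simpa using P1 hl hl0 hl1 hx InT.zero hx0

lemma D_div {x : F} (hx : InT O (some x)) : InT O (some (x / l)) := by
  rcases eq_or_ne x 0 with rfl | hx0
  · rw [zero_div]; exact InT.zero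
  · simpa using P2 hl hl0 hl1 InT.zero hx (Ne.symm hx0)

lemma D_div1l {x : F} (hx : InT O (some x)) : InT O (some (x / (1 - l))) := by
  rcases eq_or_ne x 0 with rfl | hx0
  · rw [zero_div]; exact InT.zero
  · simpa using P3 hl hl0 hl1 InT.zero hx (Ne.symm hx0)

lemma D_aff {x y : F} (hx : InT O (some x)) (hy : InT O (some y)) :
    InT O (some ((l - 1) * x + y)) := by
  rcases eq_or_ne x y with rfl | hxy
  · have h2 := D_mul hl hl0 hl1 hx
    have e : (l - 1) * x + x = l * x := by ring
    rwa [e]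
  · have h1 := P2 hl hl0 hl1 hx hy hxy
    have h2 := D_mul hl hl0 hl1 h1
    have e : l * (x + (y - x) / l) = (l - 1) * x + y := by field_simp; ring
    rwa [e] at h2

lemma D_sub {x y : F} (hx : InT O (some x)) (hy : InT O (some y)) :
    InT O (some (y - x)) := by
  have hl1' : (1 : F) - l ≠ 0 := sub_ne_zero.mpr (Ne.symm hl1)
  have h1 := D_div1l hl hl0 hl1 hx
  have h2 := D_aff hl hl0 hl1 h1 hy
  have e : (l - 1) * (x / (1 - l)) + y = y - x := by field_simp; ring
  rwa [e] at h2

lemma D_neg {x : F} (hx : InT O (some x)) : InT O (some (-x)) := by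
  simpa using D_sub hl hl0 hl1 hx InT.zero

lemma D_add {x y : F} (hx : InT O (some x)) (hy : InT O (some y)) :
    InT O (some (x + y)) := by
  have h1 := D_sub hl hl0 hl1 (D_neg hl hl0 hl1 hx) hy
  have e : y - -x = x + y := by ring
  rwa [e] at h1

lemma D_inv {x : F} (hx : InT O (some x)) (hx0 : x ≠ 0) : InT O (some x⁻¹) := by
  have hl1' : (1 : F) - l ≠ 0 := sub_ne_zero.mpr (Ne.symm hl1)
  have hlam : InT O (some l) := D_lam hl hl0 hl1
  rcases eq_or_ne x (1 - l) with rfl | hx1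
  · have h1 := D_div1l hl hl0 hl1 InT.one
    rwa [one_div] at h1
  rcases eq_or_ne x (-l) with rfl | hx2
  · have h1 := D_neg hl hl0 hl1 (D_div hl hl0 hl1 InT.one)
    have e : -(1 / l) = (-l)⁻¹ := by field_simp
    rwa [e] at h1
  -- generic case, via P4 with  a = 1 - l - x, b = 0, c = 1
  · have haT : InT O (some (1 - l - x)) :=
      D_sub hl hl0 hl1 hx (D_sub hl hl0 hl1 hlam InT.one)
    have hab : 1 - l - x ≠ 0 := by
      intro h; exact hx1 (by linear_combination -h)
    have hac : 1 - l - x ≠ 1 := by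
      intro h; exact hx2 (by linear_combination -h)
    have hbc : (0 : F) ≠ 1 := zero_ne_one
    have hden : ((1 : F) - (1 - l - x)) - l * (1 - 0) ≠ 0 := by
      intro h; exact hx0 (by linear_combination h)
    have h4 := P4 hl hl0 hl1 haT InT.zero InT.one hab hac hbc hden
    -- d = (0*(1-a) - l*a*(1-0)) / x = l - l*(1-l)/x
    have h5 := D_sub hl hl0 hl1 h4 hlam
    have h6 := D_div hl hl0 hl1 h5
    have h7 := D_div1l hl hl0 hl1 h6
    have e : (l - (0 * (1 - (1 - l - x)) - l * (1 - l - x) * (1 - 0)) /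
        ((1 - (1 - l - x)) - l * (1 - 0))) / l / (1 - l) = x⁻¹ := by
      field_simp
      ring
    rwa [e] at h7

end Derived

section Bridge
variable (hO : ∀ x ∈ O, x ≠ 0 ∧ x ≠ 1)
include hO

/-- Multiplication by elements of the subring generated by `O` preserves `InT`. -/
lemma ring_mul_InT {l : F} (hl : l ∈ O) (hl0 : l ≠ 0) (hl1 : l ≠ 1) :
    ∀ x ∈ Subring.closure O, ∀ y : F, InT O (some y) → InT O (some (x * y)) := by
  intro x hx
  induction hx using Subring.closure_induction with
  | mem z hz =>
    intro y hy
    exact D_mul hz (hO z hz).1 (hO z hz).2 hy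
  | zero => intro y hy; rw [zero_mul]; exact InT.zero
  | one => intro y hy; rw [one_mul]; exact hy
  | add x1 x2 hx1 hx2 ih1 ih2 =>
    intro y hy
    have := D_add hl hl0 hl1 (ih1 y hy) (ih2 y hy)
    rwa [← add_mul] at this
  | neg x1 hx1 ih =>
    intro y hy
    have := D_neg hl hl0 hl1 (ih y hy)
    rwa [← neg_mul] at this
  | mul x1 x2 hx1 hx2 ih1 ih2 =>
    intro y hy
    rw [mul_assoc]
    exact ih1 _ (ih2 y hy)

/-- Every element of `K = k(O)` is a finite point of `T`. -/
lemma mem_K_InT {l : F} (hl : l ∈ O) (hl0 : l ≠ 0) (hl1 : l ≠ 1) :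
    ∀ x ∈ Subfield.closure O, InT O (some x) := by
  intro x hx
  rw [Subfield.mem_closure_iff] at hx
  obtain ⟨y, hy, z, hz, hyz⟩ := hx
  rcases eq_or_ne z 0 with rfl | hz0
  · rw [← hyz, div_zero]; exact InT.zero
  · have hzT : InT O (some z) := by
      have := ring_mul_InT hO hl hl0 hl1 z hz 1 InT.one
      rwa [mul_one] at this
    have hzi : InT O (some z⁻¹) := D_inv hl hl0 hl1 hzT hz0
    have := ring_mul_InT hO hl hl0 hl1 y hy z⁻¹ hzi
    rwa [← div_eq_mul_inv, hyz] at this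

/-- Every finite point of `T` lies in `K`; `∞` is the only infinite point. -/
lemma InT_mem_K {x : Option F} (hx : InT O x) :
    x = none ∨ ∃ y ∈ Subfield.closure O, x = some y := by
  induction hx with
  | infty => exact Or.inl rfl
  | zero => exact Or.inr ⟨0, zero_mem _, rfl⟩
  | one => exact Or.inr ⟨1, one_mem _, rfl⟩
  | step a b c d hab hac had hbc hbd hcd ha hb hc h iha ihb ihc =>
    have val : ∀ {v : F}, ((some v : Option F) = none ∨
        ∃ y ∈ Subfield.closure O, (some v : Option F) = some y) → v ∈ Subfield.closure O := by
      rintro v (hv | ⟨y, hy, hv⟩)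
      · exact absurd hv (by simp)
      · obtain rfl : v = y := by simpa using hv
        exact hy
    rcases d with _ | dv
    · exact Or.inl rfl
    refine Or.inr ⟨dv, ?_, rfl⟩
    rcases a with _ | av <;> rcases b with _ | bv <;> rcases c with _ | cv
    · exact absurd rfl hab
    · exact absurd rfl hab
    · exact absurd rfl hac
    · -- a = ∞
      rw [cr1] at h
      have hbv := val ihb
      have hcv := val ihc
      have hcb : cv - bv ≠ 0 := sub_ne_zero.mpr (Ne.symm (by simpa using hbc))
      have hmem : bv + ((dv - bv) / (cv - bv)) * (cv - bv) ∈ Subfield.closure O :=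
        add_mem hbv (mul_mem (Subfield.subset_closure h) (sub_mem hcv hbv))
      have e : bv + ((dv - bv) / (cv - bv)) * (cv - bv) = dv := by field_simp; ring
      rwa [e] at hmem
    · exact absurd rfl hbc
    · -- b = ∞
      rw [cr2] at h
      have hav := val iha
      have hcv := val ihc
      have hca : cv - av ≠ 0 := sub_ne_zero.mpr (Ne.symm (by simpa using hac))
      have hda : dv - av ≠ 0 := sub_ne_zero.mpr (Ne.symm (by simpa using had))
      have hl0 : (cv - av) / (dv - av) ≠ 0 := (hO _ h).1
      have hmem : av + (cv - av) / ((cv - av) / (dv - av)) ∈ Subfield.closure O :=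
        add_mem hav (div_mem (sub_mem hcv hav) (Subfield.subset_closure h))
      have e : av + (cv - av) / ((cv - av) / (dv - av)) = dv := by
        rw [div_div_eq_mul_div, mul_div_cancel_left₀ _ hca]
        ring
      rwa [e] at hmem
    · -- c = ∞
      rw [cr3] at h
      have hav := val iha
      have hbv := val ihb
      have hda : dv - av ≠ 0 := sub_ne_zero.mpr (Ne.symm (by simpa using had))
      have hl1 : (1 : F) - (dv - bv) / (dv - av) ≠ 0 :=
        sub_ne_zero.mpr (Ne.symm (hO _ h).2)
      have hmem : (bv - ((dv - bv) / (dv - av)) * av) / (1 - (dv - bv) / (dv - av))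
          ∈ Subfield.closure O :=
        div_mem (sub_mem hbv (mul_mem (Subfield.subset_closure h) hav))
          (sub_mem (one_mem _) (Subfield.subset_closure h))
      have e : (bv - ((dv - bv) / (dv - av)) * av) / (1 - (dv - bv) / (dv - av)) = dv := by
        rw [div_eq_iff hl1]
        field_simp
        ring
      rwa [e] at hmem
    · -- all finite
      rw [cr5] at h
      have hav := val iha
      have hbv := val ihb
      have hcv := val ihc
      have hba : bv - av ≠ 0 := sub_ne_zero.mpr (Ne.symm (by simpa using hab))
      have hca : cv - av ≠ 0 := sub_ne_zero.mpr (Ne.symm (by simpa using hac))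
      have hcb : cv - bv ≠ 0 := sub_ne_zero.mpr (Ne.symm (by simpa using hbc))
      have hda : dv - av ≠ 0 := sub_ne_zero.mpr (Ne.symm (by simpa using had))
      obtain ⟨mu, hmu⟩ : ∃ m, m = ((cv - av) / (cv - bv)) * ((dv - bv) / (dv - av))
          * (cv - bv) / (cv - av) := ⟨_, rfl⟩
      have hmuK : mu ∈ Subfield.closure O := by
        rw [hmu]
        exact div_mem (mul_mem (Subfield.subset_closure h) (sub_mem hcv hbv)) (sub_mem hcv hav)
      have emu : mu = (dv - bv) / (dv - av) := by
        rw [hmu]; field_simp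
      have hmu_rel : mu * (dv - av) = dv - bv := by
        rw [emu, div_mul_cancel₀ _ hda]
      have hmu1 : (1 : F) - mu ≠ 0 := by
        intro hx
        have hmu1' : mu = 1 := by linear_combination -hx
        rw [hmu1', one_mul] at hmu_rel
        have : av = bv := by linear_combination -hmu_rel
        exact (by simpa using hab : av ≠ bv) this
      have hmem : (bv - mu * av) / (1 - mu) ∈ Subfield.closure O :=
        div_mem (sub_mem hbv (mul_mem hmuK hav)) (sub_mem (one_mem _) hmuK)
      have e : (bv - mu * av) / (1 - mu) = dv := by
        rw [div_eq_iff hmu1]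
        linear_combination hmu_rel
      rwa [e] at hmem

end Bridge

section Maps
variable {f : Equiv.Perm (Option F)}

lemma OPreserving.symm (hf : OPreserving O f) : OPreserving O f.symm := by
  intro a b c d hab hac had hbc hbd hcd
  have h2 := hf _ _ _ _ (f.symm.injective.ne hab) (f.symm.injective.ne hac)
    (f.symm.injective.ne had) (f.symm.injective.ne hbc) (f.symm.injective.ne hbd)
    (f.symm.injective.ne hcd)
  rw [Equiv.apply_symm_apply, Equiv.apply_symm_apply, Equiv.apply_symm_apply,
    Equiv.apply_symm_apply] at h2
  exact h2.symm

lemma InT_map (hf : OPreserving O f) (hinf : f none = none)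
    (h0 : f (some 0) = some 0) (h1 : f (some 1) = some 1)
    {x : Option F} (hx : InT O x) : InT O (f x) := by
  induction hx with
  | infty => rw [hinf]; exact InT.infty
  | zero => rw [h0]; exact InT.zero
  | one => rw [h1]; exact InT.one
  | step a b c d hab hac had hbc hbd hcd ha hb hc h iha ihb ihc =>
    exact InT.step (f a) (f b) (f c) (f d) (f.injective.ne hab) (f.injective.ne hac)
      (f.injective.ne had) (f.injective.ne hbc) (f.injective.ne hbd) (f.injective.ne hcd)
      iha ihb ihc ((hf a b c d hab hac had hbc hbd hcd).mp h)

end Maps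

end Aux

/-- Here `Subfield.closure O` is the subfield `K = k(O)` of `F` generated by `O`
(over the prime field `k`), and `fmap f '' K` is the image `f(K)` of `K` under `f`. -/
theorem image_of_K_eq_K {F : Type*} [Field F]
    (O : Set F) (hne : O.Nonempty) (hO : ∀ x ∈ O, x ≠ 0 ∧ x ≠ 1)
    (f : Equiv.Perm (Option F)) (hf : OPreserving O f)
    (hinf : f none = none) (h0 : f (some 0) = some 0) (h1 : f (some 1) = some 1) :
    (ringChar F = 2 → ∀ x ∈ O, ∀ y : F, y ^ 2 = x → y ∈ O) →
      fmap f '' (Subfield.closure O : Set F) = (Subfield.closure O : Set F) := by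
  intro _
  obtain ⟨l, hlO⟩ := hne
  obtain ⟨hl0, hl1⟩ := hO l hlO
  have hKT : ∀ x ∈ Subfield.closure O, InT O (some x) := mem_K_InT hO hlO hl0 hl1
  have hs0 : f.symm (some 0) = some 0 := by rw [← h0, Equiv.symm_apply_apply]; exact h0.symm
  have hs1 : f.symm (some 1) = some 1 := by rw [← h1, Equiv.symm_apply_apply]; exact h1.symm
  have hsinf : f.symm none = none := by rw [← hinf, Equiv.symm_apply_apply]; exact hinf.symm
  ext x
  constructor
  · rintro ⟨y, hy, rfl⟩
    have h2 : InT O (f (some y)) := InT_map hf hinf h0 h1 (hKT y hy)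
    rcases InT_mem_K hO h2 with hn | ⟨z, hz, hez⟩
    · exfalso
      have h3 : (some y : Option F) = none := f.injective (hn.trans hinf.symm)
      simp at h3
    · show fmap f y ∈ (Subfield.closure O : Set F)
      simp only [fmap]
      rw [hez]
      simpa using hz
  · intro hx
    have h2 : InT O (f.symm (some x)) := InT_map hf.symm hsinf hs0 hs1 (hKT x hx)
    rcases InT_mem_K hO h2 with hn | ⟨z, hz, hez⟩
    · exfalso
      have h3 : (some x : Option F) = none := f.symm.injective (hn.trans hsinf.symm)
      simp at h3
    · refine ⟨z, by simpa using hz, ?_⟩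
      have h4 : f (some z) = some x := by rw [← hez, Equiv.apply_symm_apply]
      simp only [fmap]
      rw [h4]
      rfl
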